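/- (Generalized Matsumoto theorem) In a Matsumoto graph, any two shortest paths from a vertex v to a vertex v' are braid equivalent. -/

import Mathlib

/-- A (pre-)Matsumoto graph of degree `d` realized in the real vector space `M`:
vertices, oriented compact edges labelled by their root (ingoing at the target),
infinite edges attached to a single vertex and labelled by their root, and the
family of roots of the ingoing edges at each vertex. -/
structure MatsumotoGraph (d : ℕ) (M : Type*) [AddCommGroup M] [Module ℝ M] where
  Vx : Type*
  adj : Vx → Vx → M → Prop
  inf : Vx → M → Prop
  basisAt : Vx → Fin d → M

namespace MatsumotoGraph

variable {d : ℕ} {M : Type*} [AddCommGroup M] [Module ℝ M] (G : MatsumotoGraph d M)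

/-- The set of roots. -/
def R : Set M := {α | (∃ v v', G.adj v v' α) ∨ ∃ v, G.inf v α}

/-- Membership in the convex cone generated by the ingoing roots at `v`. -/
def inCone (v : G.Vx) (α : M) : Prop :=
  ∃ c : Fin d → ℝ, (∀ i, 0 ≤ c i) ∧ α = ∑ i, c i • G.basisAt v i

/-- The positive system at a vertex. -/
def pos (v : G.Vx) : Set M := {α ∈ G.R | G.inCone v α}

/-- The negative system at a vertex. -/
def neg (v : G.Vx) : Set M := G.R \ G.pos v

/-- The convex cone generated by two vectors. -/
def cone2 (x y : M) : Set M := {z | ∃ a b : ℝ, 0 ≤ a ∧ 0 ≤ b ∧ z = a • x + b • y}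

/-- The axioms of a Matsumoto graph. -/
structure Axioms : Prop where
  adj_symm : ∀ {v v' α}, G.adj v v' α → G.adj v' v (-α)
  basis_indep : ∀ v, LinearIndependent ℝ (G.basisAt v)
  basis_span : ∀ v, Submodule.span ℝ (Set.range (G.basisAt v)) = ⊤
  ingoing : ∀ v α, ((∃ v', G.adj v' v α) ∨ G.inf v α) ↔ ∃ i, α = G.basisAt v i
  inf_noninv : ∀ v α, G.inf v α → -α ∉ G.R
  step : ∀ v v' α, G.adj v v' α → G.pos v' \ G.pos v = {α}
  posdet : ∀ v v', G.pos v = G.pos v' → v = v'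
  connected : ∀ v v', Relation.ReflTransGen (fun a b => ∃ α, G.adj a b α) v v'

/-- Walks in the graph (along compact edges), recording the roots of the traversed edges. -/
inductive Walk : G.Vx → G.Vx → Type _
  | nil (v : G.Vx) : Walk v v
  | cons {v w u : G.Vx} (α : M) (h : G.adj v w α) (p : Walk w u) : Walk v u

variable {G}

def Walk.length : ∀ {v v' : G.Vx}, G.Walk v v' → ℕ
  | _, _, .nil _ => 0
  | _, _, .cons _ _ p => p.length + 1

def Walk.roots : ∀ {v v' : G.Vx}, G.Walk v v' → List M
  | _, _, .nil _ => []
  | _, _, .cons α _ p => α :: p.roots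

def Walk.append : ∀ {v w u : G.Vx}, G.Walk v w → G.Walk w u → G.Walk v u
  | _, _, _, .nil _, q => q
  | _, _, _, .cons α h p, q => .cons α h (p.append q)

variable (G)

/-- The graph distance between two vertices. -/
noncomputable def dist (v v' : G.Vx) : ℕ := sInf {n | ∃ p : G.Walk v v', p.length = n}

end MatsumotoGraph

namespace MatsumotoGraph

variable {d : ℕ} {M : Type*} [AddCommGroup M] [Module ℝ M] (G : MatsumotoGraph d M)

/-- Elementary braid move: `p` and `q` are the two length-`m` halves, between a pair of
opposite vertices, of a rank-2 subgraph which is a `2m`-gon: all their roots lie in a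
2-dimensional subspace `W`, the set of roots in `W` is finite of cardinality `2m`, and
both paths are shortest paths of length `m`. -/
def ElemBraid {v v' : G.Vx} (p q : G.Walk v v') : Prop :=
  ∃ W : Submodule ℝ M, Module.finrank ℝ ↥W = 2 ∧
    (∀ α ∈ p.roots, α ∈ W) ∧ (∀ α ∈ q.roots, α ∈ W) ∧
    (G.R ∩ ↑W).Finite ∧ (G.R ∩ ↑W).ncard = 2 * p.length ∧
    q.length = p.length ∧ p.length = G.dist v v'

/-- Braid equivalence: the smallest equivalence relation on paths closed under
concatenation and containing the elementary braid moves. -/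
inductive BraidEquiv : ∀ {v v' : G.Vx}, G.Walk v v' → G.Walk v v' → Prop
  | elem {v v'} {p q : G.Walk v v'} : G.ElemBraid p q → BraidEquiv p q
  | refl {v v'} (p : G.Walk v v') : BraidEquiv p p
  | symm {v v'} {p q : G.Walk v v'} : BraidEquiv p q → BraidEquiv q p
  | trans {v v'} {p q r : G.Walk v v'} : BraidEquiv p q → BraidEquiv q r → BraidEquiv p r
  | append {v w u} {p p' : G.Walk v w} {q q' : G.Walk w u} :
      BraidEquiv p p' → BraidEquiv q q' → BraidEquiv (p.append q) (p'.append q')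

end MatsumotoGraph

namespace MatsumotoGraph

variable {d : ℕ} {M : Type*} [AddCommGroup M] [Module ℝ M] {G : MatsumotoGraph d M}

/-- The basis at a vertex, packaged as a `Basis`. -/
noncomputable def bas (h : G.Axioms) (v : G.Vx) : Module.Basis (Fin d) ℝ M :=
  Module.Basis.mk (h.basis_indep v) (by rw [h.basis_span v])

lemma bas_apply (h : G.Axioms) (v : G.Vx) (i : Fin d) : bas h v i = G.basisAt v i := by
  simp [bas]

lemma inCone_iff (h : G.Axioms) {v : G.Vx} {z : M} :
    G.inCone v z ↔ ∀ k, 0 ≤ (bas h v).repr z k := by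
  constructor
  · rintro ⟨c, hc, rfl⟩
    simp_rw [← bas_apply h]
    rw [(bas h v).repr_sum_self]
    exact hc
  · intro hk
    refine ⟨fun k => (bas h v).repr z k, hk, ?_⟩
    simp_rw [← bas_apply h]
    exact ((bas h v).sum_repr z).symm

lemma inCone_zero (v : G.Vx) : G.inCone v 0 :=
  ⟨0, fun _ => le_rfl, by simp⟩

lemma inCone_add {v : G.Vx} {a b : M} (ha : G.inCone v a) (hb : G.inCone v b) :
    G.inCone v (a + b) := by
  obtain ⟨c, hc, rfl⟩ := ha
  obtain ⟨c', hc', rfl⟩ := hb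
  exact ⟨c + c', fun i => add_nonneg (hc i) (hc' i), by
    rw [← Finset.sum_add_distrib]; simp [add_smul]⟩

lemma inCone_smul {v : G.Vx} {a : M} {t : ℝ} (ht : 0 ≤ t) (ha : G.inCone v a) :
    G.inCone v (t • a) := by
  obtain ⟨c, hc, rfl⟩ := ha
  exact ⟨fun i => t * c i, fun i => mul_nonneg ht (hc i), by
    rw [Finset.smul_sum]; simp [smul_smul]⟩

lemma inCone_salient (h : G.Axioms) {v : G.Vx} {a : M}
    (ha : G.inCone v a) (hb : G.inCone v (-a)) : a = 0 := by
  rw [inCone_iff h] at ha hb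
  have : (bas h v).repr a = 0 := by
    ext k
    have h1 := ha k
    have h2 := hb k
    rw [map_neg] at h2
    simp only [Finsupp.coe_neg, Pi.neg_apply] at h2
    simp only [Finsupp.coe_zero, Pi.zero_apply]
    linarith
  exact ((bas h v).repr.map_eq_zero_iff).mp this

lemma basis_mem_R (h : G.Axioms) (v : G.Vx) (i : Fin d) : G.basisAt v i ∈ G.R := by
  rcases (h.ingoing v (G.basisAt v i)).mpr ⟨i, rfl⟩ with ⟨v', hv'⟩ | hinf
  · exact Or.inl ⟨v', v, hv'⟩
  · exact Or.inr ⟨v, hinf⟩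

lemma basis_inCone (v : G.Vx) (i : Fin d) : G.inCone v (G.basisAt v i) := by
  refine ⟨fun k => if k = i then 1 else 0, fun k => by positivity, ?_⟩
  have hk : ∀ k, (if k = i then (1:ℝ) else 0) • G.basisAt v k
      = if k = i then G.basisAt v k else 0 := by
    intro k; split <;> simp
  rw [Finset.sum_congr rfl fun k _ => hk k, Finset.sum_ite_eq']
  simp

lemma basis_mem_pos (h : G.Axioms) (v : G.Vx) (i : Fin d) : G.basisAt v i ∈ G.pos v :=
  ⟨basis_mem_R h v i, basis_inCone v i⟩

lemma zero_not_mem_R (h : G.Axioms) : (0 : M) ∉ G.R := by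
  intro h0
  have h0' := h0
  rcases h0' with ⟨v, v', hadj⟩ | ⟨v, hinf⟩
  · have hstep := h.step v v' 0 hadj
    have : (0:M) ∈ G.pos v' \ G.pos v := by rw [hstep]; rfl
    exact this.2 ⟨Or.inl ⟨v, v', hadj⟩, inCone_zero v⟩
  · exact h.inf_noninv v 0 hinf (by rwa [neg_zero])

lemma pos_asymm (h : G.Axioms) {v : G.Vx} {a : M}
    (ha : a ∈ G.pos v) (hb : -a ∈ G.pos v) : False := by
  have := inCone_salient h ha.2 hb.2
  subst this
  exact zero_not_mem_R h ha.1

lemma mem_pos_target (h : G.Axioms) {v w : G.Vx} {a : M} (hadj : G.adj v w a) :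
    a ∈ G.pos w := by
  have hstep := h.step v w a hadj
  have : a ∈ G.pos w \ G.pos v := by rw [hstep]; rfl
  exact this.1

lemma not_mem_pos_source (h : G.Axioms) {v w : G.Vx} {a : M} (hadj : G.adj v w a) :
    a ∉ G.pos v := by
  have hstep := h.step v w a hadj
  have : a ∈ G.pos w \ G.pos v := by rw [hstep]; rfl
  exact this.2

lemma neg_mem_pos_source (h : G.Axioms) {v w : G.Vx} {a : M} (hadj : G.adj v w a) :
    -a ∈ G.pos v := mem_pos_target h (h.adj_symm hadj)

lemma neg_not_mem_pos_target (h : G.Axioms) {v w : G.Vx} {a : M} (hadj : G.adj v w a) :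
    -a ∉ G.pos w := not_mem_pos_source h (h.adj_symm hadj)

lemma pos_cross (h : G.Axioms) {v w : G.Vx} {a : M} (hadj : G.adj v w a) :
    G.pos w = insert a (G.pos v \ {-a}) := by
  have h1 := h.step v w a hadj
  have h2 := h.step w v (-a) (h.adj_symm hadj)
  ext x
  constructor
  · intro hx
    by_cases hxa : x = a
    · exact hxa ▸ Set.mem_insert _ _
    · have hxv : x ∈ G.pos v := by
        by_contra hxv
        have : x ∈ G.pos w \ G.pos v := ⟨hx, hxv⟩
        rw [h1] at this
        exact hxa this
      refine Set.mem_insert_of_mem _ ⟨hxv, ?_⟩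
      intro hxna
      rw [Set.mem_singleton_iff] at hxna
      subst hxna
      exact neg_not_mem_pos_target h hadj hx
  · rintro (rfl | ⟨hxv, hxna⟩)
    · exact mem_pos_target h hadj
    · by_contra hxw
      have : x ∈ G.pos v \ G.pos w := ⟨hxv, hxw⟩
      rw [h2] at this
      exact hxna this

lemma cross_pres (h : G.Axioms) {u u' : G.Vx} {δ a : M} (hadj : G.adj u u' δ)
    (ha : a ∈ G.pos u ∨ -a ∈ G.pos u) : a ∈ G.pos u' ∨ -a ∈ G.pos u' := by
  rw [pos_cross h hadj]
  rcases ha with ha | ha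
  · by_cases hne : a = -δ
    · right; rw [hne, neg_neg]; exact Set.mem_insert _ _
    · left; exact Set.mem_insert_of_mem _ ⟨ha, by simpa using hne⟩
  · by_cases hne : -a = -δ
    · left; rw [neg_injective hne]; exact Set.mem_insert _ _
    · right; exact Set.mem_insert_of_mem _ ⟨ha, by simpa using hne⟩

lemma exists_pos_of_mem_R (h : G.Axioms) {a : M} (ha : a ∈ G.R) :
    ∃ v₀, a ∈ G.pos v₀ := by
  rcases ha with ⟨v1, v2, hadj⟩ | ⟨v1, hinf⟩
  · exact ⟨v2, mem_pos_target h hadj⟩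
  · obtain ⟨i, hi⟩ := (h.ingoing v1 a).mp (Or.inr hinf)
    exact ⟨v1, hi ▸ basis_mem_pos h v1 i⟩

lemma pos_or_neg (h : G.Axioms) {a : M} (ha : a ∈ G.R) (v : G.Vx) :
    a ∈ G.pos v ∨ -a ∈ G.pos v := by
  obtain ⟨v₀, hv₀⟩ := exists_pos_of_mem_R h ha
  induction h.connected v₀ v with
  | refl => exact Or.inl hv₀
  | tail _ hstep ih =>
    obtain ⟨δ, hδ⟩ := hstep
    exact cross_pres h hδ ih

lemma pos_all_of_noninv (h : G.Axioms) {a : M} (ha : a ∈ G.R) (hna : -a ∉ G.R)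
    (v : G.Vx) : a ∈ G.pos v := by
  obtain ⟨v₀, hv₀⟩ := exists_pos_of_mem_R h ha
  induction h.connected v₀ v with
  | refl => exact hv₀
  | tail _ hstep ih =>
    obtain ⟨δ, hδ⟩ := hstep
    rw [pos_cross h hδ]
    by_cases hne : a = -δ
    · exfalso
      apply hna
      rw [hne, neg_neg]
      exact Or.inl ⟨_, _, hδ⟩
    · exact Set.mem_insert_of_mem _ ⟨ih, by simpa using hne⟩

@[simp] lemma Walk.length_nil (v : G.Vx) : (Walk.nil v).length = 0 := rfl
@[simp] lemma Walk.length_cons {v w u : G.Vx} (a : M) (hadj : G.adj v w a)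
    (p : G.Walk w u) : (Walk.cons a hadj p).length = p.length + 1 := rfl
@[simp] lemma Walk.roots_nil (v : G.Vx) : (Walk.nil v).roots = [] := rfl
@[simp] lemma Walk.roots_cons {v w u : G.Vx} (a : M) (hadj : G.adj v w a)
    (p : G.Walk w u) : (Walk.cons a hadj p).roots = a :: p.roots := rfl
@[simp] lemma Walk.nil_append {v u : G.Vx} (q : G.Walk v u) :
    ((Walk.nil v).append q) = q := rfl
@[simp] lemma Walk.cons_append {v w u z : G.Vx} (a : M) (hadj : G.adj v w a)
    (p : G.Walk w u) (q : G.Walk u z) :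
    ((Walk.cons a hadj p).append q) = Walk.cons a hadj (p.append q) := rfl

lemma Walk.length_append : ∀ {v w u : G.Vx} (p : G.Walk v w) (q : G.Walk w u),
    (p.append q).length = p.length + q.length := by
  intro v w u p q
  induction p with
  | nil v => simp
  | cons a hadj p ih => simp [ih]; omega

lemma Walk.length_roots : ∀ {v w : G.Vx} (p : G.Walk v w),
    p.roots.length = p.length := by
  intro v w p
  induction p with
  | nil v => simp
  | cons a hadj p ih => simp [ih]

lemma exists_walk (h : G.Axioms) (v x : G.Vx) : Nonempty (G.Walk v x) := by
  induction h.connected v x with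
  | refl => exact ⟨Walk.nil v⟩
  | tail _ hstep ih =>
    obtain ⟨δ, hδ⟩ := hstep
    obtain ⟨p⟩ := ih
    exact ⟨p.append (Walk.cons δ hδ (Walk.nil _))⟩

lemma dist_le {v x : G.Vx} (p : G.Walk v x) : G.dist v x ≤ p.length :=
  Nat.sInf_le ⟨p, rfl⟩

lemma exists_geodesic (h : G.Axioms) (v x : G.Vx) :
    ∃ p : G.Walk v x, p.length = G.dist v x := by
  have hne : {n | ∃ p : G.Walk v x, p.length = n}.Nonempty := by
    obtain ⟨p⟩ := exists_walk h v x
    exact ⟨p.length, p, rfl⟩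
  exact Nat.sInf_mem hne

lemma dist_le_succ (h : G.Axioms) {v w : G.Vx} {a : M} (hadj : G.adj v w a)
    (x : G.Vx) : G.dist v x ≤ G.dist w x + 1 := by
  obtain ⟨p, hp⟩ := exists_geodesic h w x
  have := dist_le (Walk.cons a hadj p)
  simpa [hp] using this

/-- The set of roots separating `v` from `x`. -/
def Nset (G : MatsumotoGraph d M) (v x : G.Vx) : Set M := G.pos x \ G.pos v

lemma Nset_subset_roots (h : G.Axioms) :
    ∀ {v x : G.Vx} (p : G.Walk v x) {γ}, γ ∈ G.Nset v x → γ ∈ p.roots := by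
  intro v x p
  induction p with
  | nil v => intro γ hγ; exact absurd hγ.1 (by exact hγ.2)
  | cons a hadj p ih =>
    intro γ hγ
    simp only [Walk.roots_cons, List.mem_cons]
    by_cases hγa : γ = a
    · exact Or.inl hγa
    · refine Or.inr (ih ⟨hγ.1, ?_⟩)
      rw [pos_cross h hadj]
      rintro (rfl | ⟨hv, _⟩)
      · exact hγa rfl
      · exact hγ.2 hv

lemma Nset_finite (h : G.Axioms) (v x : G.Vx) : (G.Nset v x).Finite := by
  obtain ⟨p⟩ := exists_walk h v x
  exact Set.Finite.subset p.roots.finite_toSet (fun γ hγ => Nset_subset_roots h p hγ)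

lemma ncard_Nset_le_length (h : G.Axioms) {v x : G.Vx} (p : G.Walk v x) :
    (G.Nset v x).ncard ≤ p.length := by
  classical
  have hsub : G.Nset v x ⊆ ↑p.roots.toFinset := by
    intro γ hγ
    simp only [List.coe_toFinset, Set.mem_setOf_eq]
    exact Nset_subset_roots h p hγ
  calc (G.Nset v x).ncard ≤ (↑p.roots.toFinset : Set M).ncard :=
        Set.ncard_le_ncard hsub (p.roots.toFinset : Finset M).finite_toSet
    _ = p.roots.toFinset.card := Set.ncard_coe_finset _
    _ ≤ p.roots.length := p.roots.toFinset_card_le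
    _ = p.length := Walk.length_roots p

lemma ncard_Nset_le_dist (h : G.Axioms) (v x : G.Vx) :
    (G.Nset v x).ncard ≤ G.dist v x := by
  obtain ⟨p, hp⟩ := exists_geodesic h v x
  exact hp ▸ ncard_Nset_le_length h p

lemma Nset_cross (h : G.Axioms) {v w x : G.Vx} {a : M} (hadj : G.adj v w a)
    (hpos : a ∈ G.pos x) : G.Nset w x = G.Nset v x \ {a} ∧ a ∈ G.Nset v x := by
  have hna : -a ∉ G.pos x := fun hc => pos_asymm h hpos hc
  have hposw := pos_cross h hadj
  refine ⟨?_, hpos, not_mem_pos_source h hadj⟩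
  ext γ
  constructor
  · intro hγ
    have hx : γ ∈ G.pos x := hγ.1
    have hnw : γ ∉ G.pos w := hγ.2
    rw [hposw] at hnw
    have h1 : γ ≠ a := fun hc => hnw (hc ▸ Set.mem_insert _ _)
    have h2 : γ ∉ G.pos v := by
      intro hv
      refine hnw (Set.mem_insert_of_mem _ ((Set.mem_diff γ).mpr ⟨hv, ?_⟩))
      intro hc
      rw [Set.mem_singleton_iff] at hc
      exact hna (hc ▸ hx)
    exact (Set.mem_diff γ).mpr ⟨(Set.mem_diff γ).mpr ⟨hx, h2⟩, by simpa using h1⟩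
  · intro hγ
    have hx : γ ∈ G.pos x := hγ.1.1
    have hnv : γ ∉ G.pos v := hγ.1.2
    have hne : γ ≠ a := by simpa using hγ.2
    refine (Set.mem_diff γ).mpr ⟨hx, ?_⟩
    rw [hposw]
    intro hc
    rcases Set.mem_insert_iff.mp hc with hc' | hc'
    · exact hne hc'
    · exact hnv hc'.1

lemma Nset_cross_neg (h : G.Axioms) {v w x : G.Vx} {a : M} (hadj : G.adj v w a)
    (hpos : a ∉ G.pos x) :
    G.Nset w x = insert (-a) (G.Nset v x) ∧ -a ∉ G.Nset v x := by
  have haR : a ∈ G.R := Or.inl ⟨v, w, hadj⟩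
  have hnpos : -a ∈ G.pos x := (pos_or_neg h haR x).resolve_left hpos
  have hane : a ≠ -a := by
    intro hc
    have h2 : (2:ℝ) • a = 0 := by
      rw [two_smul]
      nth_rewrite 2 [hc]
      exact add_neg_cancel a
    have : a = 0 := (smul_eq_zero.mp h2).resolve_left (by norm_num)
    exact zero_not_mem_R h (this ▸ haR)
  have hposw := pos_cross h hadj
  constructor
  · ext γ
    constructor
    · intro hγ
      have hx : γ ∈ G.pos x := hγ.1
      have hnw : γ ∉ G.pos w := hγ.2
      rw [hposw] at hnw
      by_cases hc : γ = -a
      · exact hc ▸ Set.mem_insert _ _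
      · refine Set.mem_insert_of_mem _ ((Set.mem_diff γ).mpr ⟨hx, ?_⟩)
        intro hv
        exact hnw (Set.mem_insert_of_mem _ ((Set.mem_diff γ).mpr ⟨hv, by simpa using hc⟩))
    · intro hγ
      rcases Set.mem_insert_iff.mp hγ with rfl | hγ'
      · refine (Set.mem_diff _).mpr ⟨hnpos, ?_⟩
        rw [hposw]
        intro hc
        rcases Set.mem_insert_iff.mp hc with hc' | hc'
        · exact hane hc'.symm
        · exact hc'.2 rfl
      · refine (Set.mem_diff γ).mpr ⟨hγ'.1, ?_⟩
        rw [hposw]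
        intro hc
        rcases Set.mem_insert_iff.mp hc with hc' | hc'
        · exact hpos (hc' ▸ hγ'.1)
        · exact hγ'.2 hc'.1
  · exact fun hc => hc.2 (neg_mem_pos_source h hadj)
lemma exchange (h : G.Axioms) (y : G.Vx) (D : Set M) (hD : D.Nonempty) (hDR : D ⊆ G.R)
    (hDneg : ∀ γ ∈ D, -γ ∈ G.pos y) (C : Set M)
    (Czero : (0:M) ∈ C)
    (Cadd : ∀ a ∈ C, ∀ b ∈ C, a + b ∈ C)
    (Csmul : ∀ a ∈ C, ∀ t : ℝ, 0 ≤ t → t • a ∈ C)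
    (Csal : ∀ a ∈ C, -a ∈ C → a = 0)
    (hDC : D ⊆ C)
    (hposC : ∀ γ ∈ G.pos y, -γ ∉ D → γ ∈ C) :
    ∃ (i : Fin d) (w : G.Vx), -(G.basisAt y i) ∈ D ∧ G.adj y w (-(G.basisAt y i)) := by
  have hbase : ∃ i, -(G.basisAt y i) ∈ D := by
    by_contra hc
    push_neg at hc
    have hbC : ∀ i, G.basisAt y i ∈ C := fun i =>
      hposC _ (basis_mem_pos h y i) (hc i)
    have hcone : ∀ z, G.inCone y z → z ∈ C := by
      rintro z ⟨c, hcnn, rfl⟩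
      refine Finset.sum_induction _ (· ∈ C) (fun a b ha hb => Cadd a ha b hb) Czero ?_
      intro i _
      exact Csmul _ (hbC i) (c i) (hcnn i)
    obtain ⟨γ, hγ⟩ := hD
    have h1 : γ ∈ C := hDC hγ
    have h2 : -γ ∈ C := hcone _ (hDneg γ hγ).2
    have := Csal γ h1 h2
    exact zero_not_mem_R h (this ▸ hDR hγ)
  obtain ⟨i, hi⟩ := hbase
  have hR : -(G.basisAt y i) ∈ G.R := hDR hi
  rcases (h.ingoing y (G.basisAt y i)).mpr ⟨i, rfl⟩ with ⟨v', hv'⟩ | hinf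
  · exact ⟨i, v', hi, h.adj_symm hv'⟩
  · exact absurd hR (h.inf_noninv y _ hinf)

lemma dist_le_ncard_Nset (h : G.Axioms) :
    ∀ (n : ℕ) (v x : G.Vx), (G.Nset v x).ncard = n → G.dist v x ≤ n := by
  intro n
  induction n using Nat.strong_induction_on with
  | _ n IH =>
    intro v x hn
    rcases Nat.eq_zero_or_pos n with rfl | hpos
    · have hfin := Nset_finite h v x
      have hemp : G.Nset v x = ∅ := (Set.ncard_eq_zero hfin).mp hn
      have hxy : G.pos x = G.pos v := by
        apply Set.Subset.antisymm
        · intro γ hγ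
          by_contra hγv
          have : γ ∈ G.Nset v x := ⟨hγ, hγv⟩
          rw [hemp] at this
          exact Set.notMem_empty _ this
        · intro γ hγ
          by_cases hγx : γ ∈ G.pos x
          · exact hγx
          · have hng : -γ ∈ G.pos x := (pos_or_neg h hγ.1 x).resolve_left hγx
            have hnv : -γ ∉ G.pos v := fun hc => pos_asymm h hγ hc
            have : -γ ∈ G.Nset v x := ⟨hng, hnv⟩
            rw [hemp] at this
            exact absurd this (Set.notMem_empty _)
      have hvx : x = v := h.posdet x v hxy
      subst hvx
      exact dist_le (Walk.nil x)
    · have hne : (G.Nset v x).Nonempty := Set.nonempty_of_ncard_ne_zero (by omega)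
      have hposC : ∀ γ ∈ G.pos v, -γ ∉ G.Nset v x → γ ∈ {z | G.inCone x z} := by
        intro γ hγ hγD
        have h1 : -γ ∉ G.pos x := by
          intro hc
          exact hγD ⟨hc, fun hv => pos_asymm h hγ hv⟩
        exact ((pos_or_neg h hγ.1 x).resolve_right h1).2
      obtain ⟨i, w, hiD, hadj⟩ := exchange h v (G.Nset v x) hne (fun γ hγ => hγ.1.1)
        (fun γ hγ => ((pos_or_neg h hγ.1.1 v).resolve_left hγ.2))
        {z | G.inCone x z} (inCone_zero x)
        (fun a ha b hb => inCone_add ha hb)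
        (fun a ha t ht => inCone_smul ht ha)
        (fun a ha hb => inCone_salient h ha hb)
        (fun γ hγ => hγ.1.2)
        hposC
      obtain ⟨hNw, haN⟩ := Nset_cross h hadj hiD.1
      have hfin := Nset_finite h v x
      have hcard : (G.Nset w x).ncard = n - 1 := by
        rw [hNw, Set.ncard_diff_singleton_of_mem haN, hn]
      have h1 : G.dist w x ≤ n - 1 := IH (n-1) (by omega) w x hcard
      have h2 := dist_le_succ h hadj x
      omega

lemma dist_eq_ncard (h : G.Axioms) (v x : G.Vx) :
    G.dist v x = (G.Nset v x).ncard :=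
  le_antisymm (dist_le_ncard_Nset h _ v x rfl) (ncard_Nset_le_dist h v x)

lemma dist_tail (h : G.Axioms) {v w x : G.Vx} {a : M} (hadj : G.adj v w a)
    (p₁ : G.Walk w x) (hgeo : p₁.length + 1 = G.dist v x) :
    G.dist w x + 1 = G.dist v x := by
  have h1 : G.dist w x ≤ p₁.length := dist_le p₁
  have h2 := dist_le_succ h hadj x
  omega

lemma first_root_mem_pos (h : G.Axioms) {v w x : G.Vx} {a : M} (hadj : G.adj v w a)
    (hd : G.dist w x + 1 = G.dist v x) : a ∈ G.pos x := by
  by_contra hc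
  obtain ⟨hNw, hnotin⟩ := Nset_cross_neg h hadj hc
  have hfin := Nset_finite h v x
  have hcard : (G.Nset w x).ncard = (G.Nset v x).ncard + 1 := by
    rw [hNw, Set.ncard_insert_of_notMem hnotin hfin]
  rw [dist_eq_ncard h v x, dist_eq_ncard h w x] at hd
  omega
lemma repr_off_pair (h : G.Axioms) {v : G.Vx} {i j : Fin d} {z : M}
    (hz : z ∈ Submodule.span ℝ {G.basisAt v i, G.basisAt v j}) {k : Fin d}
    (hki : k ≠ i) (hkj : k ≠ j) : (bas h v).repr z k = 0 := by
  obtain ⟨ca, cb, hz'⟩ := Submodule.mem_span_pair.mp hz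
  rw [← hz']
  simp only [← bas_apply h, map_add, map_smul, Finsupp.coe_add, Finsupp.coe_smul,
    Pi.add_apply, Pi.smul_apply, Module.Basis.repr_self, Finsupp.single_apply,
    if_neg (Ne.symm hki), if_neg (Ne.symm hkj), smul_zero, add_zero]

lemma repr_pair_recon (h : G.Axioms) {v : G.Vx} {i j : Fin d} (hij : i ≠ j) {z : M}
    (hz : ∀ k, k ≠ i → k ≠ j → (bas h v).repr z k = 0) :
    z = ((bas h v).repr z i) • G.basisAt v i + ((bas h v).repr z j) • G.basisAt v j := by
  classical
  have hsum := (bas h v).sum_repr z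
  have hsub : ∑ k ∈ ({i, j} : Finset (Fin d)), (bas h v).repr z k • bas h v k
      = ∑ k, (bas h v).repr z k • bas h v k := by
    apply Finset.sum_subset (Finset.subset_univ _)
    intro k _ hk
    simp only [Finset.mem_insert, Finset.mem_singleton] at hk
    push_neg at hk
    rw [hz k hk.1 hk.2, zero_smul]
  rw [Finset.sum_pair hij] at hsub
  rw [← bas_apply h v i, ← bas_apply h v j]
  rw [← hsub] at hsum
  exact hsum.symm

lemma mem_span_pair_of_coords (h : G.Axioms) {v : G.Vx} {i j : Fin d} (hij : i ≠ j)
    {z : M} (hz : ∀ k, k ≠ i → k ≠ j → (bas h v).repr z k = 0) :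
    z ∈ Submodule.span ℝ {G.basisAt v i, G.basisAt v j} :=
  Submodule.mem_span_pair.mpr ⟨_, _, (repr_pair_recon h hij hz).symm⟩

lemma mem_W_inCone_coords (h : G.Axioms) {v : G.Vx} {i j : Fin d} (hij : i ≠ j) {z : M}
    (hz : z ∈ Submodule.span ℝ {G.basisAt v i, G.basisAt v j}) (hc : G.inCone v z) :
    ∃ ca cb : ℝ, 0 ≤ ca ∧ 0 ≤ cb ∧ z = ca • G.basisAt v i + cb • G.basisAt v j := by
  rw [inCone_iff h] at hc
  exact ⟨_, _, hc i, hc j,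
    repr_pair_recon h hij (fun k hki hkj => repr_off_pair h hz hki hkj)⟩

lemma pair_inCone {v : G.Vx} {i j : Fin d} {ca cb : ℝ} (hca : 0 ≤ ca) (hcb : 0 ≤ cb) :
    G.inCone v (ca • G.basisAt v i + cb • G.basisAt v j) :=
  inCone_add (inCone_smul hca (basis_inCone v i)) (inCone_smul hcb (basis_inCone v j))

lemma target_eq (h : G.Axioms) {v w w' : G.Vx} {a : M}
    (h1 : G.adj v w a) (h2 : G.adj v w' a) : w = w' :=
  h.posdet w w' (by rw [pos_cross h h1, pos_cross h h2])

lemma repr_pair_apply_i (h : G.Axioms) {v : G.Vx} {i j : Fin d} (hij : i ≠ j) (ca cb : ℝ) :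
    (bas h v).repr (ca • G.basisAt v i + cb • G.basisAt v j) i = ca := by
  simp [← bas_apply h, map_add, map_smul, Module.Basis.repr_self, Finsupp.single_apply,
    Ne.symm hij]

lemma repr_pair_apply_j (h : G.Axioms) {v : G.Vx} {i j : Fin d} (hij : i ≠ j) (ca cb : ℝ) :
    (bas h v).repr (ca • G.basisAt v i + cb • G.basisAt v j) j = cb := by
  simp [← bas_apply h, map_add, map_smul, Module.Basis.repr_self, Finsupp.single_apply, hij]

lemma fin2_pair_injective {α : Type*} {i j : α} (hij : i ≠ j) :
    Function.Injective (fun s : Fin 2 => if s = 0 then i else j) := by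
  intro s t hst
  fin_cases s <;> fin_cases t <;> simp_all
lemma polygon (h : G.Axioms) {v wa wb x : G.Vx} {a b : M}
    (ha : G.adj v wa a) (hb : G.adj v wb b) (hab : a ≠ b)
    (hax : a ∈ G.pos x) (hbx : b ∈ G.pos x) :
    ∃ (u : G.Vx) (pa : G.Walk wa u) (pb : G.Walk wb u),
      G.ElemBraid (Walk.cons a ha pa) (Walk.cons b hb pb) ∧
      pb.length = pa.length ∧
      G.dist v x = (pa.length + 1) + G.dist u x := by
  classical
  obtain ⟨i, hi⟩ := (h.ingoing v (-a)).mp (Or.inl ⟨wa, h.adj_symm ha⟩)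
  obtain ⟨j, hj⟩ := (h.ingoing v (-b)).mp (Or.inl ⟨wb, h.adj_symm hb⟩)
  have hij : i ≠ j := by
    rintro rfl
    rw [← hj] at hi
    exact hab (neg_injective hi)
  have ha2 : a = -(G.basisAt v i) := by rw [← hi, neg_neg]
  have hb2 : b = -(G.basisAt v j) := by rw [← hj, neg_neg]
  set W := Submodule.span ℝ {G.basisAt v i, G.basisAt v j} with hWdef
  set P := {γ : M | γ ∈ G.pos v ∧ γ ∈ W} with hPdef
  have heiW : G.basisAt v i ∈ W := Submodule.subset_span (Set.mem_insert _ _)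
  have hejW : G.basisAt v j ∈ W := Submodule.subset_span (Set.mem_insert_of_mem _ rfl)
  have heiP : G.basisAt v i ∈ P := ⟨basis_mem_pos h v i, heiW⟩
  have hejP : G.basisAt v j ∈ P := ⟨basis_mem_pos h v j, hejW⟩
  have hPpos : ∀ γ ∈ P, γ ∈ G.pos v := fun γ hγ => hγ.1
  have hPcoord : ∀ γ ∈ P, ∃ ca cb : ℝ, 0 ≤ ca ∧ 0 ≤ cb ∧
      γ = ca • G.basisAt v i + cb • G.basisAt v j :=
    fun γ hγ => mem_W_inCone_coords h hij hγ.2 hγ.1.2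
  have hnegP : ∀ γ ∈ P, -γ ∈ G.pos x := by
    intro γ hγ
    obtain ⟨ca, cb, hca, hcb, hγeq⟩ := hPcoord γ hγ
    have hInX : G.inCone x (-γ) := by
      have heq : -γ = ca • a + cb • b := by rw [hγeq, ha2, hb2]; module
      rw [heq]
      exact inCone_add (inCone_smul hca hax.2) (inCone_smul hcb hbx.2)
    have hR : -γ ∈ G.R := by
      by_contra hnR
      have hpx : γ ∈ G.pos x := pos_all_of_noninv h hγ.1.1 hnR x
      have hz := inCone_salient h hpx.2 hInX
      exact zero_not_mem_R h (hz ▸ hγ.1.1)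
    exact ⟨hR, hInX⟩
  have hPnegv : ∀ γ ∈ P, -γ ∉ G.pos v := fun γ hγ hc => pos_asymm h hγ.1 hc
  have hnegPN : Neg.neg '' P ⊆ G.Nset v x := by
    rintro γ ⟨δ, hδ, rfl⟩
    exact ⟨hnegP δ hδ, hPnegv δ hδ⟩
  have hPfin : P.Finite := by
    have h1 : (Neg.neg '' P).Finite := (Nset_finite h v x).subset hnegPN
    have h2 : P = Neg.neg '' (Neg.neg '' P) := by
      rw [Set.image_image]; simp
    rw [h2]; exact h1.image _
  set m := P.ncard with hm
  have hmpos : 0 < m := (Set.ncard_pos hPfin).mpr ⟨_, heiP⟩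
  -- the salient cone C
  set C := {z : M | ∃ (w : M) (ca cb : ℝ), G.inCone v w ∧ (w ∈ W → w = 0) ∧ 0 ≤ ca ∧ 0 ≤ cb ∧
    z = w - ca • G.basisAt v i - cb • G.basisAt v j} with hCdef
  have hCzero : (0:M) ∈ C := ⟨0, 0, 0, inCone_zero v, fun _ => rfl, le_rfl, le_rfl, by simp⟩
  have keylem : ∀ w w' : M, G.inCone v w → (w ∈ W → w = 0) → G.inCone v w' →
      (w' ∈ W → w' = 0) → (w + w') ∈ W → w = 0 ∧ w' = 0 := by
    intro w w' hw hwW hw' hwW' hsum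
    have hco : ∀ k, k ≠ i → k ≠ j → (bas h v).repr w k = 0 ∧ (bas h v).repr w' k = 0 := by
      intro k hki hkj
      have h0 : (bas h v).repr (w + w') k = 0 := repr_off_pair h hsum hki hkj
      rw [map_add] at h0
      have h1 := (inCone_iff h).mp hw k
      have h2 := (inCone_iff h).mp hw' k
      simp only [Finsupp.coe_add, Pi.add_apply] at h0
      constructor <;> linarith
    exact ⟨hwW (mem_span_pair_of_coords h hij fun k h1 h2 => (hco k h1 h2).1),
           hwW' (mem_span_pair_of_coords h hij fun k h1 h2 => (hco k h1 h2).2)⟩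
  have hCadd : ∀ p ∈ C, ∀ q ∈ C, p + q ∈ C := by
    rintro p ⟨w, ca, cb, hw, hwW, hca, hcb, rfl⟩ q ⟨w', ca', cb', hw', hwW', hca', hcb', rfl⟩
    refine ⟨w + w', ca + ca', cb + cb', inCone_add hw hw', ?_, by linarith, by linarith,
      by module⟩
    intro hsum
    obtain ⟨e1, e2⟩ := keylem w w' hw hwW hw' hwW' hsum
    rw [e1, e2, add_zero]
  have hCsmul : ∀ p ∈ C, ∀ t : ℝ, 0 ≤ t → t • p ∈ C := by
    rintro p ⟨w, ca, cb, hw, hwW, hca, hcb, rfl⟩ t ht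
    refine ⟨t • w, t * ca, t * cb, inCone_smul ht hw, ?_, mul_nonneg ht hca,
      mul_nonneg ht hcb, by module⟩
    intro hmem
    rcases eq_or_lt_of_le ht with rfl | htpos
    · rw [zero_smul]
    · have hwmem : w ∈ W := by
        have := W.smul_mem t⁻¹ hmem
        rwa [inv_smul_smul₀ (ne_of_gt htpos)] at this
      rw [hwW hwmem, smul_zero]
  have hCsal : ∀ p ∈ C, -p ∈ C → p = 0 := by
    rintro p ⟨w, ca, cb, hw, hwW, hca, hcb, rfl⟩ ⟨w', ca', cb', hw', hwW', hca', hcb', hneg⟩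
    have hsum : w + w' = (ca + ca') • G.basisAt v i + (cb + cb') • G.basisAt v j := by
      linear_combination (norm := module) -hneg
    have hWsum : w + w' ∈ W := by
      rw [hsum]
      exact W.add_mem (W.smul_mem _ heiW) (W.smul_mem _ hejW)
    obtain ⟨e1, e2⟩ := keylem w w' hw hwW hw' hwW' hWsum
    rw [e1, e2] at hsum
    have hzero : (ca + ca') • G.basisAt v i + (cb + cb') • G.basisAt v j = 0 := by
      rw [← hsum]; simp
    have hcai := repr_pair_apply_i (v := v) h hij (ca + ca') (cb + cb')
    have hcbj := repr_pair_apply_j (v := v) h hij (ca + ca') (cb + cb')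
    rw [hzero] at hcai hcbj
    simp only [map_zero, Finsupp.coe_zero, Pi.zero_apply] at hcai hcbj
    have hca0 : ca = 0 := by linarith
    have hcb0 : cb = 0 := by linarith
    rw [e1, hca0, hcb0]
    simp
  -- the inductive construction of the polygon sides
  have build : ∀ (n : ℕ) (Q : Set M) (y : G.Vx), Q ⊆ P → (P \ Q).ncard = n →
      G.pos y = (G.pos v \ Q) ∪ (Neg.neg '' Q) →
      ∃ (u : G.Vx) (wk : G.Walk y u), wk.length = n ∧
        (∀ γ ∈ wk.roots, γ ∈ Neg.neg '' P) ∧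
        G.pos u = (G.pos v \ P) ∪ (Neg.neg '' P) := by
    intro n
    induction n with
    | zero =>
      intro Q y hQP hcard hpos
      have hPQ : P \ Q = ∅ := (Set.ncard_eq_zero (hPfin.subset Set.diff_subset)).mp hcard
      have hQeq : Q = P := Set.Subset.antisymm hQP (Set.diff_eq_empty.mp hPQ)
      exact ⟨y, Walk.nil y, rfl, by simp, by rw [hpos, hQeq]⟩
    | succ n IH =>
      intro Q y hQP hcard hpos
      have hPQne : (P \ Q).Nonempty := Set.nonempty_of_ncard_ne_zero (by omega)
      have hDne : (Neg.neg '' (P \ Q)).Nonempty := hPQne.image _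
      have hDR : Neg.neg '' (P \ Q) ⊆ G.R := by
        rintro γ ⟨δ, hδ, rfl⟩
        exact (hnegP δ hδ.1).1
      have hDneg : ∀ γ ∈ Neg.neg '' (P \ Q), -γ ∈ G.pos y := by
        rintro γ ⟨δ, hδ, rfl⟩
        rw [neg_neg, hpos]
        exact Or.inl ⟨hPpos δ hδ.1, hδ.2⟩
      have hDC : Neg.neg '' (P \ Q) ⊆ C := by
        rintro γ ⟨δ, hδ, rfl⟩
        obtain ⟨ca, cb, hca, hcb, hδeq⟩ := hPcoord δ hδ.1
        exact ⟨0, ca, cb, inCone_zero v, fun _ => rfl, hca, hcb, by rw [hδeq]; module⟩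
      have hposC : ∀ γ ∈ G.pos y, -γ ∉ Neg.neg '' (P \ Q) → γ ∈ C := by
        intro γ hγ hγD
        rw [hpos] at hγ
        rcases hγ with hγ | hγim
        · by_cases hγW : γ ∈ W
          · exact absurd ⟨γ, ⟨⟨hγ.1, hγW⟩, hγ.2⟩, rfl⟩ hγD
          · exact ⟨γ, 0, 0, hγ.1.2, fun hc => absurd hc hγW, le_rfl, le_rfl, by simp⟩
        · obtain ⟨δ, hδ, rfl⟩ := hγim
          obtain ⟨ca, cb, hca, hcb, hδeq⟩ := hPcoord δ (hQP hδ)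
          exact ⟨0, ca, cb, inCone_zero v, fun _ => rfl, hca, hcb, by rw [hδeq]; module⟩
      obtain ⟨i₀, w', hεD, hadjy⟩ := exchange h y (Neg.neg '' (P \ Q)) hDne hDR hDneg C
        hCzero hCadd hCsmul hCsal hDC hposC
      have hεPQ : G.basisAt y i₀ ∈ P \ Q := by
        obtain ⟨δ, hδ, hδeq⟩ := hεD
        rwa [← neg_injective hδeq]
      have hεv : G.basisAt y i₀ ∈ G.pos v := hPpos _ hεPQ.1
      have hεnim : G.basisAt y i₀ ∉ Neg.neg '' Q := by
        rintro ⟨q, hq, hqeq⟩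
        exact pos_asymm h (hPpos q (hQP hq)) (by rw [hqeq]; exact hεv)
      have hposw' : G.pos w' = (G.pos v \ insert (G.basisAt y i₀) Q) ∪
          (Neg.neg '' insert (G.basisAt y i₀) Q) := by
        rw [pos_cross h hadjy, neg_neg, hpos, Set.image_insert_eq,
          Set.union_diff_distrib, Set.diff_diff, Set.union_singleton,
          Set.diff_singleton_eq_self hεnim, Set.union_insert]
      have hcard' : (P \ insert (G.basisAt y i₀) Q).ncard = n := by
        have hdd : P \ insert (G.basisAt y i₀) Q = (P \ Q) \ {G.basisAt y i₀} := by
          ext γ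
          simp only [Set.mem_diff, Set.mem_insert_iff, Set.mem_singleton_iff]
          tauto
        rw [hdd, Set.ncard_diff_singleton_of_mem hεPQ, hcard]
        omega
      have hQ'P : insert (G.basisAt y i₀) Q ⊆ P := Set.insert_subset hεPQ.1 hQP
      obtain ⟨u, wk, hlen, hroots, hposu⟩ := IH (insert (G.basisAt y i₀) Q) w' hQ'P
        hcard' hposw'
      refine ⟨u, Walk.cons (-(G.basisAt y i₀)) hadjy wk, by simp [hlen], ?_, hposu⟩
      intro γ hγ
      rcases List.mem_cons.mp hγ with rfl | hγ'
      · exact ⟨_, hεPQ.1, rfl⟩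
      · exact hroots γ hγ'
  -- build the two sides
  have hposwa : G.pos wa = (G.pos v \ {G.basisAt v i}) ∪ (Neg.neg '' {G.basisAt v i}) := by
    rw [pos_cross h ha, ha2, neg_neg, Set.image_singleton, Set.union_singleton]
  have hposwb : G.pos wb = (G.pos v \ {G.basisAt v j}) ∪ (Neg.neg '' {G.basisAt v j}) := by
    rw [pos_cross h hb, hb2, neg_neg, Set.image_singleton, Set.union_singleton]
  have hcarda : (P \ {G.basisAt v i}).ncard = m - 1 :=
    Set.ncard_diff_singleton_of_mem heiP
  have hcardb : (P \ {G.basisAt v j}).ncard = m - 1 :=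
    Set.ncard_diff_singleton_of_mem hejP
  obtain ⟨ua, pa, hpalen, hparoots, hposua⟩ := build (m-1) {G.basisAt v i} wa
    (Set.singleton_subset_iff.mpr heiP) hcarda hposwa
  obtain ⟨ub, pb, hpblen, hpbroots, hposub⟩ := build (m-1) {G.basisAt v j} wb
    (Set.singleton_subset_iff.mpr hejP) hcardb hposwb
  have huab : ua = ub := h.posdet ua ub (by rw [hposua, hposub])
  subst huab
  -- facts about lengths and distances
  have hmlen : (Walk.cons a ha pa).length = m := by
    simp only [Walk.length_cons, hpalen]; omega
  have hmlenb : (Walk.cons b hb pb).length = m := by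
    simp only [Walk.length_cons, hpblen]; omega
  have hdisj : Disjoint P (Neg.neg '' P) := by
    rw [Set.disjoint_left]
    rintro γ hγ ⟨δ, hδ, hδeq⟩
    exact pos_asymm h (hPpos δ hδ) (by rw [hδeq]; exact hPpos γ hγ)
  have hRW : G.R ∩ ↑W = P ∪ Neg.neg '' P := by
    ext γ
    constructor
    · rintro ⟨hγR, hγW⟩
      rcases pos_or_neg h hγR v with hγv | hγv
      · exact Or.inl ⟨hγv, hγW⟩
      · exact Or.inr ⟨-γ, ⟨hγv, W.neg_mem hγW⟩, by rw [neg_neg]⟩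
    · rintro (hγ | ⟨δ, hδ, rfl⟩)
      · exact ⟨hγ.1.1, hγ.2⟩
      · exact ⟨(hnegP δ hδ).1, W.neg_mem hδ.2⟩
  have hNva : G.Nset v ua = Neg.neg '' P := by
    ext γ
    constructor
    · intro hγ
      have h1 := hγ.1
      rw [hposua] at h1
      rcases h1 with h1 | h1
      · exact absurd h1.1 hγ.2
      · exact h1
    · rintro ⟨δ, hδ, rfl⟩
      exact ⟨by rw [hposua]; exact Or.inr ⟨δ, hδ, rfl⟩, hPnegv δ hδ⟩
  have hdva : G.dist v ua = m := by
    have hd1 : G.dist v ua ≤ m := by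
      have := dist_le (Walk.cons a ha pa)
      rwa [hmlen] at this
    have hd2 : m ≤ G.dist v ua := by
      have h1 := ncard_Nset_le_dist h v ua
      rwa [hNva, Set.ncard_image_of_injective P neg_injective] at h1
    omega
  have hNux : G.Nset ua x = G.Nset v x \ Neg.neg '' P := by
    ext γ
    constructor
    · intro hγ
      have hn2 : γ ∉ Neg.neg '' P := fun hc => hγ.2 (by rw [hposua]; exact Or.inr hc)
      have hnv : γ ∉ G.pos v := by
        intro hv
        by_cases hγP : γ ∈ P
        · exact pos_asymm h hγ.1 (hnegP γ hγP)
        · exact hγ.2 (by rw [hposua]; exact Or.inl ⟨hv, hγP⟩)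
      exact ⟨⟨hγ.1, hnv⟩, hn2⟩
    · rintro ⟨⟨hx, hnv⟩, hnim⟩
      refine ⟨hx, ?_⟩
      rw [hposua]
      rintro (hc | hc)
      · exact hnv hc.1
      · exact hnim hc
  have hdux : G.dist ua x = G.dist v x - m := by
    rw [dist_eq_ncard h ua x, dist_eq_ncard h v x, hNux,
      Set.ncard_diff hnegPN (hPfin.image _),
      Set.ncard_image_of_injective P neg_injective]
  have hmled : m ≤ G.dist v x := by
    rw [dist_eq_ncard h v x]
    have := Set.ncard_le_ncard hnegPN (Nset_finite h v x)
    rwa [Set.ncard_image_of_injective P neg_injective] at this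
  -- linear independence and rank of W
  have hinj2 : Function.Injective (fun s : Fin 2 => if s = 0 then i else j) :=
    fin2_pair_injective hij
  have hli : LinearIndependent ℝ (fun s : Fin 2 => if s = 0 then G.basisAt v i else G.basisAt v j) := by
    have hcomp : (fun s : Fin 2 => if s = 0 then G.basisAt v i else G.basisAt v j)
        = G.basisAt v ∘ (fun s : Fin 2 => if s = 0 then i else j) := by
      funext s
      by_cases hs : s = 0 <;> simp [hs]
    rw [hcomp]
    exact (h.basis_indep v).comp _ hinj2
  have hrange : Set.range (fun s : Fin 2 => if s = 0 then G.basisAt v i else G.basisAt v j)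
      = {G.basisAt v i, G.basisAt v j} := by
    ext z
    simp only [Set.mem_range, Set.mem_insert_iff, Set.mem_singleton_iff]
    constructor
    · rintro ⟨s, rfl⟩
      by_cases hs : s = 0 <;> simp [hs]
    · rintro (rfl | rfl)
      · exact ⟨0, by simp⟩
      · exact ⟨1, by simp⟩
  have hfinrank : Module.finrank ℝ ↥W = 2 := by
    rw [hWdef, ← hrange, finrank_span_eq_card hli]
    simp
  -- assemble
  refine ⟨ua, pa, pb, ⟨W, hfinrank, ?_, ?_, ?_, ?_, ?_, ?_⟩, by omega, by omega⟩
  · intro γ hγ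
    rcases List.mem_cons.mp hγ with rfl | hγ'
    · rw [ha2]; exact W.neg_mem heiW
    · obtain ⟨δ, hδ, rfl⟩ := hparoots γ hγ'
      exact W.neg_mem hδ.2
  · intro γ hγ
    rcases List.mem_cons.mp hγ with rfl | hγ'
    · rw [hb2]; exact W.neg_mem hejW
    · obtain ⟨δ, hδ, rfl⟩ := hpbroots γ hγ'
      exact W.neg_mem hδ.2
  · rw [hRW]
    exact hPfin.union (hPfin.image _)
  · rw [hRW, Set.ncard_union_eq hdisj hPfin (hPfin.image _),
      Set.ncard_image_of_injective P neg_injective, hmlen]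
    omega
  · rw [hmlen, hmlenb]
  · rw [hmlen, hdva]
end MatsumotoGraph

/-- Generalized Matsumoto theorem: any two shortest paths between two vertices of a
Matsumoto graph are braid equivalent. -/
theorem matsumoto_braid_equiv {d : ℕ} {M : Type*} [AddCommGroup M] [Module ℝ M]
    (G : MatsumotoGraph d M) (hG : G.Axioms) {v v' : G.Vx}
    (p q : G.Walk v v') (hp : p.length = G.dist v v') (hq : q.length = G.dist v v') :
    G.BraidEquiv p q := by
  open MatsumotoGraph in
  suffices H : ∀ (n : ℕ) {y x : G.Vx} (p q : G.Walk y x), G.dist y x = n →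
      p.length = n → q.length = n → G.BraidEquiv p q by
    exact H (G.dist v v') p q rfl hp hq
  intro n
  induction n using Nat.strong_induction_on with
  | _ n IH =>
    intro y x p q hd hp hq
    cases p with
    | nil =>
      cases q with
      | nil => exact MatsumotoGraph.BraidEquiv.refl _
      | cons b hb q₁ =>
        exfalso
        simp only [MatsumotoGraph.Walk.length_nil] at hp
        simp only [MatsumotoGraph.Walk.length_cons] at hq
        omega
    | cons a ha p₁ =>
      rename_i w₁
      cases q with
      | nil =>
        exfalso
        simp only [MatsumotoGraph.Walk.length_nil] at hq
        simp only [MatsumotoGraph.Walk.length_cons] at hp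
        omega
      | cons b hb q₁ =>
        rename_i w₂
        simp only [MatsumotoGraph.Walk.length_cons] at hp hq
        have hd1 := MatsumotoGraph.dist_le p₁
        have hd2 := MatsumotoGraph.dist_le_succ hG ha x
        have hd1' := MatsumotoGraph.dist_le q₁
        have hd2' := MatsumotoGraph.dist_le_succ hG hb x
        have hdw1 : G.dist w₁ x + 1 = G.dist y x := by omega
        have hdw2 : G.dist w₂ x + 1 = G.dist y x := by omega
        by_cases hab : a = b
        · subst hab
          have hw : w₁ = w₂ := MatsumotoGraph.target_eq hG ha hb
          subst hw
          have hbe : G.BraidEquiv p₁ q₁ :=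
            IH (n-1) (by omega) p₁ q₁ (by omega) (by omega) (by omega)
          exact MatsumotoGraph.BraidEquiv.append
            (MatsumotoGraph.BraidEquiv.refl (MatsumotoGraph.Walk.cons a ha
              (MatsumotoGraph.Walk.nil w₁))) hbe
        · have hax : a ∈ G.pos x := MatsumotoGraph.first_root_mem_pos hG ha hdw1
          have hbx : b ∈ G.pos x := MatsumotoGraph.first_root_mem_pos hG hb hdw2
          obtain ⟨u, pa, pb, hbraid, hlen, hdsum⟩ :=
            MatsumotoGraph.polygon hG ha hb hab hax hbx
          obtain ⟨r, hr⟩ := MatsumotoGraph.exists_geodesic hG u x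
          have hlen1 : (pa.append r).length = n - 1 := by
            rw [MatsumotoGraph.Walk.length_append, hr]; omega
          have hlen2 : (pb.append r).length = n - 1 := by
            rw [MatsumotoGraph.Walk.length_append, hr]; omega
          have hE1 : G.BraidEquiv p₁ (pa.append r) :=
            IH (n-1) (by omega) p₁ (pa.append r) (by omega) (by omega) (by omega)
          have hE2 : G.BraidEquiv q₁ (pb.append r) :=
            IH (n-1) (by omega) q₁ (pb.append r) (by omega) (by omega) (by omega)
          have hE3 : G.BraidEquiv (MatsumotoGraph.Walk.cons a ha (pa.append r))
              (MatsumotoGraph.Walk.cons b hb (pb.append r)) :=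
            MatsumotoGraph.BraidEquiv.append (MatsumotoGraph.BraidEquiv.elem hbraid)
              (MatsumotoGraph.BraidEquiv.refl r)
          have hP1 : G.BraidEquiv (MatsumotoGraph.Walk.cons a ha p₁)
              (MatsumotoGraph.Walk.cons a ha (pa.append r)) :=
            MatsumotoGraph.BraidEquiv.append
              (MatsumotoGraph.BraidEquiv.refl (MatsumotoGraph.Walk.cons a ha
                (MatsumotoGraph.Walk.nil w₁))) hE1
          have hP2 : G.BraidEquiv (MatsumotoGraph.Walk.cons b hb q₁)
              (MatsumotoGraph.Walk.cons b hb (pb.append r)) :=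
            MatsumotoGraph.BraidEquiv.append
              (MatsumotoGraph.BraidEquiv.refl (MatsumotoGraph.Walk.cons b hb
                (MatsumotoGraph.Walk.nil w₂))) hE2
          exact hP1.trans (hE3.trans hP2.symm)
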